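/- Let X and Y be nonempty closed convex subsets of a real Hilbert space H with X ∩ Y ≠ ∅. Then the fixed-point set of the composition proj_Y ∘ proj_X equals X ∩ Y. -/

import Mathlib

open RealInnerProductSpace

/-- `P` is the metric (orthogonal) projection onto `X`: it maps into `X`
and satisfies the variational characterization. -/
def IsProjOn {H : Type*} [NormedAddCommGroup H] [InnerProductSpace ℝ H]
    (X : Set H) (P : H → H) : Prop :=
  ∀ z, P z ∈ X ∧ ∀ w ∈ X, ⟪z - P z, w - P z⟫ ≤ 0

theorem fix_proj_comp_eq_inter
    {H : Type*} [NormedAddCommGroup H] [InnerProductSpace ℝ H]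
    (X Y : Set H) (hXne : X.Nonempty) (hYne : Y.Nonempty)
    (hXc : IsClosed X) (hYc : IsClosed Y)
    (hXconv : Convex ℝ X) (hYconv : Convex ℝ Y)
    (hXY : (X ∩ Y).Nonempty)
    (projX projY : H → H)
    (hPX : IsProjOn X projX) (hPY : IsProjOn Y projY) :
    {z : H | projY (projX z) = z} = X ∩ Y := by
  have idem : ∀ (Z : Set H) (P : H → H), IsProjOn Z P → ∀ z ∈ Z, P z = z := by
    intro Z P hP z hz
    have h := (hP z).2 z hz
    have h0 : z - P z = 0 := real_inner_self_nonpos (x := z - P z) |>.mp h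
    exact (sub_eq_zero.mp h0).symm
  ext z
  simp only [Set.mem_setOf_eq, Set.mem_inter_iff]
  constructor
  · intro hz
    obtain ⟨p, hpX, hpY⟩ := hXY
    set u := projX z with hu
    have huX : u ∈ X := (hPX z).1
    have hzY : z ∈ Y := by rw [← hz]; exact (hPY u).1
    have h1 : ⟪z - u, p - u⟫ ≤ 0 := (hPX z).2 p hpX
    have h2 : ⟪u - z, p - z⟫ ≤ 0 := by
      have := (hPY u).2 p hpY
      rwa [hz] at this
    have hzu : z = u := by
      have hsum : ⟪z - u, z - u⟫ ≤ 0 := by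
        have e1 : ⟪z - u, p - u⟫ - ⟪z - u, p - z⟫ = ⟪z - u, z - u⟫ := by
          rw [← inner_sub_right, show p - u - (p - z) = z - u by abel]
        have e2 : ⟪u - z, p - z⟫ = -⟪z - u, p - z⟫ := by
          rw [show u - z = -(z - u) by abel, inner_neg_left]
        linarith [e2 ▸ h2]
      have := real_inner_self_nonpos (x := z - u) |>.mp hsum
      exact (sub_eq_zero.mp this)
    exact ⟨hzu ▸ huX, hzY⟩
  · rintro ⟨hzX, hzY⟩
    rw [idem X projX hPX z hzX, idem Y projY hPY z hzY]
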